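/- For δ > 0, define the coincidence count φ^{coinc}_δ(x¹,x²) = #{(u,v) ∈ x¹ × x² : |u − v| ≤ δ} and the kernel h(x,y) = ½(φ^{coinc}_δ(x¹,x²) + φ^{coinc}_δ(y¹,y²) − φ^{coinc}_δ(x¹,y²) − φ^{coinc}_δ(y¹,x²)). Then h is continuous, with respect to the product Skorohod-type metric d, at every point ((x¹,x²),(y¹,y²)) of the set C_δ = {((x¹,x²),(y¹,y²)) : (x¹ ∪ y¹) ∩ ((x² ± δ) ∪ (y² ± δ)) = ∅}, where x² ± δ denotes {v + δ : v ∈ x²} ∪ {v − δ : v ∈ x²}. -/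
import Mathlib


open Set

/-- The counting function of a finite point configuration `x ⊆ [0,1]`:
`N_x(t) = #{u ∈ x : u ≤ t}`. -/
noncomputable def countFn (x : Finset ℝ) (t : ℝ) : ℝ :=
  ((x.filter (fun u => u ≤ t)).card : ℝ)

/-- A strictly increasing continuous mapping of `[0,1]` onto itself. -/
def IsTimeChange (l : ℝ → ℝ) : Prop :=
  StrictMonoOn l (Set.Icc 0 1) ∧ ContinuousOn l (Set.Icc 0 1) ∧
    l '' Set.Icc 0 1 = Set.Icc 0 1

/-- The uniform Skorohod metric on (càdlàg) functions on `[0,1]`. -/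
noncomputable def dD (f g : ℝ → ℝ) : ℝ :=
  sInf {ε : ℝ | 0 < ε ∧ ∃ l : ℝ → ℝ, IsTimeChange l ∧
    (∀ t ∈ Set.Icc (0:ℝ) 1, |l t - t| ≤ ε) ∧
    (∀ t ∈ Set.Icc (0:ℝ) 1, |f (l t) - g t| ≤ ε)}

/-- The induced metric on finite point configurations. -/
noncomputable def dX (x y : Finset ℝ) : ℝ := dD (countFn x) (countFn y)

/-- The sup product metric on `X² = X × X`. -/
noncomputable def dX2 (a b : Finset ℝ × Finset ℝ) : ℝ := max (dX a.1 b.1) (dX a.2 b.2)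

/-- The sup product metric on `(X²)²`. -/
noncomputable def dXX (p q : (Finset ℝ × Finset ℝ) × (Finset ℝ × Finset ℝ)) : ℝ :=
  max (dX2 p.1 q.1) (dX2 p.2 q.2)

/-- The coincidence count with delay `δ`:
`φ^{coinc}_δ(a,b) = #{(u,v) ∈ a × b : |u − v| ≤ δ}`. -/
noncomputable def phiCoinc (δ : ℝ) (a b : Finset ℝ) : ℝ :=
  (((a ×ˢ b).filter (fun p => |p.1 - p.2| ≤ δ)).card : ℝ)

/-- The coincidence kernel `h_{φ^{coinc}_δ}`. -/
noncomputable def hCoinc (δ : ℝ) (x y : Finset ℝ × Finset ℝ) : ℝ :=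
  (phiCoinc δ x.1 x.2 + phiCoinc δ y.1 y.2 - phiCoinc δ x.1 y.2 - phiCoinc δ y.1 x.2) / 2

/-- Membership in the set `C_δ`: `(x¹ ∪ y¹) ∩ ((x² ± δ) ∪ (y² ± δ)) = ∅`. -/
def memCδ (δ : ℝ) (x y : Finset ℝ × Finset ℝ) : Prop :=
  ∀ u ∈ x.1 ∪ y.1, ∀ v ∈ x.2 ∪ y.2, u ≠ v + δ ∧ u ≠ v - δ

lemma natCast_eq_of_abs_lt_one {m n : ℕ} (h : |(m:ℝ) - n| < 1) : m = n := by
  have h2 : |(m:ℤ) - (n:ℤ)| < 1 := by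
    have : ((|(m:ℤ) - (n:ℤ)| : ℤ) : ℝ) < 1 := by push_cast; exact h
    exact_mod_cast this
  rw [abs_lt] at h2; omega

lemma abs_iff_lemma (δ g ε A B : ℝ) (h : |A - B| ≤ 2*ε)
    (h1 : g ≤ |B - δ|) (h2 : g ≤ |B + δ|) (hg : 2*ε < g) : (|A| ≤ δ ↔ |B| ≤ δ) := by
  have h0 : (0:ℝ) ≤ |A - B| := abs_nonneg _
  rw [abs_le] at h
  rcases le_abs.mp h1 with h1 | h1 <;> rcases le_abs.mp h2 with h2 | h2 <;>
    constructor <;> (intro hh; rw [abs_le] at hh ⊢; constructor <;> linarith)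

lemma key_bij (a a' : Finset ℝ) (ha : ∀ u ∈ a, u ∈ Icc (0:ℝ) 1)
    (ha' : ∀ u ∈ a', u ∈ Icc (0:ℝ) 1)
    (ε : ℝ) (hε2 : ε < 1/2) (l : ℝ → ℝ) (hl : IsTimeChange l)
    (hlt : ∀ t ∈ Icc (0:ℝ) 1, |l t - t| ≤ ε)
    (hfg : ∀ t ∈ Icc (0:ℝ) 1, |countFn a (l t) - countFn a' t| ≤ ε) :
    a'.image l = a ∧ Set.InjOn l ↑a' ∧ ∀ u ∈ a', |l u - u| ≤ ε := by
  classical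
  obtain ⟨hmono, hcont, himg⟩ := hl
  have h0I : (0:ℝ) ∈ Icc (0:ℝ) 1 := left_mem_Icc.mpr zero_le_one
  have h1I : (1:ℝ) ∈ Icc (0:ℝ) 1 := right_mem_Icc.mpr zero_le_one
  have hl0 : l 0 = 0 := by
    obtain ⟨t, htI, hteq⟩ : ∃ t ∈ Icc (0:ℝ) 1, l t = 0 := by
      have : (0:ℝ) ∈ l '' Icc 0 1 := by rw [himg]; exact h0I
      obtain ⟨t, ht, he⟩ := this; exact ⟨t, ht, he⟩
    have hl0m : l 0 ∈ Icc (0:ℝ) 1 := by rw [← himg]; exact mem_image_of_mem l h0I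
    rcases eq_or_lt_of_le htI.1 with h | h
    · subst h; exact hteq
    · have := hmono h0I htI h
      rw [hteq] at this
      linarith [hl0m.1]
  have hl1 : l 1 = 1 := by
    obtain ⟨t, htI, hteq⟩ : ∃ t ∈ Icc (0:ℝ) 1, l t = 1 := by
      have : (1:ℝ) ∈ l '' Icc 0 1 := by rw [himg]; exact h1I
      obtain ⟨t, ht, he⟩ := this; exact ⟨t, ht, he⟩
    have hl1m : l 1 ∈ Icc (0:ℝ) 1 := by rw [← himg]; exact mem_image_of_mem l h1I
    rcases eq_or_lt_of_le htI.2 with h | h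
    · subst h; exact hteq
    · have := hmono htI h1I h
      rw [hteq] at this
      linarith [hl1m.2]
  have hcnt : ∀ t ∈ Icc (0:ℝ) 1, countFn a (l t) = countFn a' t := by
    intro t ht
    have h := hfg t ht
    unfold countFn at h ⊢
    exact congrArg _ (natCast_eq_of_abs_lt_one (lt_of_le_of_lt h (by linarith)))
  have hmem : ∀ u' ∈ a', l u' ∈ a := by
    intro u' hu'
    have huI := ha' u' hu'
    by_contra hna
    rcases eq_or_lt_of_le huI.1 with h0 | hpos
    · -- u' = 0
      have hcard1 : 0 < (a'.filter (fun z => z ≤ (0:ℝ))).card :=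
        Finset.card_pos.mpr ⟨u', Finset.mem_filter.mpr ⟨hu', by rw [← h0]⟩⟩
      have hc := hcnt 0 h0I
      rw [hl0] at hc
      unfold countFn at hc
      have hceq : (a.filter (fun z => z ≤ (0:ℝ))).card = (a'.filter (fun z => z ≤ (0:ℝ))).card := by
        exact_mod_cast hc
      have : 0 < (a.filter (fun z => z ≤ (0:ℝ))).card := by omega
      obtain ⟨z, hz⟩ := Finset.card_pos.mp this
      have hz' := Finset.mem_filter.mp hz
      have hz0 : z = 0 := le_antisymm hz'.2 (ha z hz'.1).1
      exact hna (by rw [← h0, hl0, ← hz0]; exact hz'.1)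
    · have hlu0 : 0 < l u' := by
        have := hmono h0I huI hpos
        rw [hl0] at this; exact this
      have hluI : l u' ∈ Icc (0:ℝ) 1 := by rw [← himg]; exact mem_image_of_mem l huI
      set B := a.filter (fun z => z < l u') with hB
      set w := (insert (0:ℝ) B).max' (Finset.insert_nonempty _ _) with hw
      have hw0 : 0 ≤ w := Finset.le_max' _ _ (Finset.mem_insert_self _ _)
      have hwlt : w < l u' := by
        have hm := (insert (0:ℝ) B).max'_mem (Finset.insert_nonempty _ _)
        rw [← hw] at hm
        rcases Finset.mem_insert.mp hm with h | h
        · rw [h]; exact hlu0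
        · exact (Finset.mem_filter.mp h).2
      have hwI : w ∈ Icc (0:ℝ) 1 := ⟨hw0, le_trans (le_of_lt hwlt) hluI.2⟩
      obtain ⟨t, htI, hlt_eq⟩ : ∃ t ∈ Icc (0:ℝ) 1, l t = w := by
        have : w ∈ l '' Icc 0 1 := by rw [himg]; exact hwI
        obtain ⟨t, ht, he⟩ := this; exact ⟨t, ht, he⟩
      have htlt : t < u' := by
        by_contra hc
        push_neg at hc
        have := hmono.monotoneOn huI htI hc
        rw [hlt_eq] at this; linarith
      have hfeq : a.filter (fun z => z ≤ w) = a.filter (fun z => z ≤ l u') := by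
        ext z
        simp only [Finset.mem_filter]
        constructor
        · rintro ⟨hza, hzw⟩; exact ⟨hza, le_trans hzw (le_of_lt hwlt)⟩
        · rintro ⟨hza, hzl⟩
          refine ⟨hza, Finset.le_max' _ _ (Finset.mem_insert_of_mem (Finset.mem_filter.mpr ⟨hza, ?_⟩))⟩
          exact lt_of_le_of_ne hzl (fun he => hna (he ▸ hza))
      have e1 := hcnt t htI
      have e2 := hcnt u' huI
      rw [hlt_eq] at e1
      unfold countFn at e1 e2
      rw [hfeq] at e1
      have ecard : (a'.filter (fun z => z ≤ t)).card = (a'.filter (fun z => z ≤ u')).card := by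
        exact_mod_cast e1.symm.trans e2
      have hlt' : (a'.filter (fun z => z ≤ t)).card < (a'.filter (fun z => z ≤ u')).card := by
        apply Finset.card_lt_card
        rw [Finset.ssubset_iff_of_subset]
        · exact ⟨u', Finset.mem_filter.mpr ⟨hu', le_refl _⟩,
            fun hmemf => absurd (Finset.mem_filter.mp hmemf).2 (not_le.mpr htlt)⟩
        · intro z hz
          rcases Finset.mem_filter.mp hz with ⟨hz1, hz2⟩
          exact Finset.mem_filter.mpr ⟨hz1, le_trans hz2 (le_of_lt htlt)⟩
      omega
  have hcard : a.card = a'.card := by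
    have hc := hcnt 1 h1I
    rw [hl1] at hc
    unfold countFn at hc
    rw [Finset.filter_true_of_mem (fun u hu => (ha u hu).2),
        Finset.filter_true_of_mem (fun u hu => (ha' u hu).2)] at hc
    exact_mod_cast hc
  have hinj : Set.InjOn l ↑a' := (hmono.injOn).mono (fun z hz => ha' z hz)
  have hsub : a'.image l ⊆ a := by
    intro z hz
    obtain ⟨u, hu, he⟩ := Finset.mem_image.mp hz
    exact he ▸ hmem u hu
  have hicard : (a'.image l).card = a.card := by
    rw [Finset.card_image_of_injOn hinj, hcard]
  exact ⟨Finset.eq_of_subset_of_card_le hsub hicard.ge, hinj,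
    fun u hu => hlt u (ha' u hu)⟩

lemma dD_set_nonempty (a a' : Finset ℝ) :
    {ε : ℝ | 0 < ε ∧ ∃ l : ℝ → ℝ, IsTimeChange l ∧
      (∀ t ∈ Set.Icc (0:ℝ) 1, |l t - t| ≤ ε) ∧
      (∀ t ∈ Set.Icc (0:ℝ) 1, |countFn a (l t) - countFn a' t| ≤ ε)}.Nonempty := by
  refine ⟨(a.card : ℝ) + a'.card + 1, ?_, id, ?_, ?_, ?_⟩
  · positivity
  · exact ⟨fun u _ v _ h => h, continuousOn_id, image_id _⟩
  · intro t _; simp; positivity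
  · intro t _
    unfold countFn
    have h1 := Finset.card_filter_le a (fun u => u ≤ t)
    have h2 := Finset.card_filter_le a' (fun u => u ≤ t)
    rw [abs_le]
    constructor
    · push_cast
      have : ((a'.filter (fun u => u ≤ t)).card : ℝ) ≤ a'.card := by exact_mod_cast h2
      have h0 : (0:ℝ) ≤ ((a.filter (fun u => u ≤ t)).card : ℝ) := by positivity
      simp only [id]
      linarith
    · have : ((a.filter (fun u => u ≤ t)).card : ℝ) ≤ a.card := by exact_mod_cast h1
      have h0 : (0:ℝ) ≤ ((a'.filter (fun u => u ≤ t)).card : ℝ) := by positivity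
      simp only [id]
      linarith

lemma extract_lemma (a a' : Finset ℝ) (η : ℝ) (hη : 0 < η) (hle : dX a a' ≤ η) :
    ∃ ε' l, 0 < ε' ∧ ε' ≤ 2*η ∧ IsTimeChange l ∧
      (∀ t ∈ Icc (0:ℝ) 1, |l t - t| ≤ ε') ∧
      (∀ t ∈ Icc (0:ℝ) 1, |countFn a (l t) - countFn a' t| ≤ ε') := by
  have hlt : dX a a' < 2*η := lt_of_le_of_lt hle (by linarith)
  unfold dX dD at hlt
  obtain ⟨ε', hmem, hlt2⟩ := exists_lt_of_csInf_lt (dD_set_nonempty a a') hlt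
  obtain ⟨hpos, l, htc, hb1, hb2⟩ := hmem
  exact ⟨ε', l, hpos, le_of_lt hlt2, htc, hb1, hb2⟩

lemma phi_eq (δ g ε : ℝ) (h2ε : 2*(2*ε) < g) (a b a' b' : Finset ℝ)
    (σ τ : ℝ → ℝ) (hσ : a'.image σ = a) (hσi : Set.InjOn σ ↑a')
    (hτ : b'.image τ = b) (hτi : Set.InjOn τ ↑b')
    (hgap : ∀ u ∈ a, ∀ v ∈ b, g ≤ |u - v - δ| ∧ g ≤ |u - v + δ|)
    (hσd : ∀ u ∈ a', |σ u - u| ≤ ε) (hτd : ∀ v ∈ b', |τ v - v| ≤ ε) :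
    phiCoinc δ a' b' = phiCoinc δ a b := by
  classical
  unfold phiCoinc
  refine congrArg _ ?_
  refine Finset.card_bij (fun p _ => (σ p.1, τ p.2)) ?_ ?_ ?_
  · rintro p hp
    rw [Finset.mem_filter, Finset.mem_product] at hp
    obtain ⟨⟨hp1, hp2⟩, hP⟩ := hp
    have hma : σ p.1 ∈ a := hσ ▸ Finset.mem_image_of_mem σ hp1
    have hmb : τ p.2 ∈ b := hτ ▸ Finset.mem_image_of_mem τ hp2
    have hgap' := hgap _ hma _ hmb
    have hAB : |(p.1 - p.2) - (σ p.1 - τ p.2)| ≤ 2*(2*ε) := by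
      have e1 := hσd _ hp1
      have e2 := hτd _ hp2
      have e1' : |p.1 - σ p.1| ≤ ε := by rw [abs_sub_comm]; exact e1
      calc |(p.1 - p.2) - (σ p.1 - τ p.2)| = |(p.1 - σ p.1) + (τ p.2 - p.2)| := by ring_nf
        _ ≤ |p.1 - σ p.1| + |τ p.2 - p.2| := abs_add_le _ _
        _ ≤ 2*(2*ε) := by linarith [abs_nonneg (p.1 - σ p.1)]
    rw [Finset.mem_filter, Finset.mem_product]
    exact ⟨⟨hma, hmb⟩,
      (abs_iff_lemma δ g (2*ε) _ _ hAB hgap'.1 hgap'.2 h2ε).mp hP⟩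
  · rintro p hp q hq he
    rw [Finset.mem_filter, Finset.mem_product] at hp hq
    rw [Prod.mk.injEq] at he
    exact Prod.ext (hσi hp.1.1 hq.1.1 he.1) (hτi hp.1.2 hq.1.2 he.2)
  · rintro q hq
    rw [Finset.mem_filter, Finset.mem_product] at hq
    obtain ⟨⟨hq1, hq2⟩, hP⟩ := hq
    obtain ⟨u', hu', heu⟩ := Finset.mem_image.mp (hσ ▸ hq1 : q.1 ∈ a'.image σ)
    obtain ⟨v', hv', hev⟩ := Finset.mem_image.mp (hτ ▸ hq2 : q.2 ∈ b'.image τ)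
    have hgap' := hgap _ hq1 _ hq2
    have hAB : |(u' - v') - (q.1 - q.2)| ≤ 2*(2*ε) := by
      have e1 := hσd _ hu'
      have e2 := hτd _ hv'
      rw [heu] at e1; rw [hev] at e2
      have e1' : |u' - q.1| ≤ ε := by rw [abs_sub_comm]; exact e1
      calc |(u' - v') - (q.1 - q.2)| = |(u' - q.1) + (q.2 - v')| := by ring_nf
        _ ≤ |u' - q.1| + |q.2 - v'| := abs_add_le _ _
        _ ≤ 2*(2*ε) := by
            have : |q.2 - v'| ≤ ε := e2
            linarith [abs_nonneg (u' - q.1)]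
    refine ⟨(u', v'), ?_, ?_⟩
    · rw [Finset.mem_filter, Finset.mem_product]
      exact ⟨⟨hu', hv'⟩,
        (abs_iff_lemma δ g (2*ε) _ _ hAB hgap'.1 hgap'.2 h2ε).mpr hP⟩
    · exact Prod.ext heu hev

/-- The coincidence kernel `h_{φ^{coinc}_δ}` is continuous (w.r.t. the product Skorohod
metric `d`) at every point of `C_δ`. -/
theorem stmt_4 (δ : ℝ) (hδ : 0 < δ)
    (x y : Finset ℝ × Finset ℝ)
    (hx1 : ∀ u ∈ x.1, u ∈ Set.Icc (0:ℝ) 1) (hx2 : ∀ v ∈ x.2, v ∈ Set.Icc (0:ℝ) 1)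
    (hy1 : ∀ u ∈ y.1, u ∈ Set.Icc (0:ℝ) 1) (hy2 : ∀ v ∈ y.2, v ∈ Set.Icc (0:ℝ) 1)
    (hC : memCδ δ x y) :
    ∀ ε > 0, ∃ η > 0, ∀ x' y' : Finset ℝ × Finset ℝ,
      (∀ u ∈ x'.1, u ∈ Set.Icc (0:ℝ) 1) → (∀ v ∈ x'.2, v ∈ Set.Icc (0:ℝ) 1) →
      (∀ u ∈ y'.1, u ∈ Set.Icc (0:ℝ) 1) → (∀ v ∈ y'.2, v ∈ Set.Icc (0:ℝ) 1) →
      dXX (x, y) (x', y') ≤ η → |hCoinc δ (x'.1, x'.2) (y'.1, y'.2) - hCoinc δ x y| ≤ ε := by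
  classical
  intro ε hε
  obtain ⟨g, hg0, hgap⟩ : ∃ g > 0, ∀ u ∈ x.1 ∪ y.1, ∀ v ∈ x.2 ∪ y.2,
      g ≤ |u - v - δ| ∧ g ≤ |u - v + δ| := by
    set F : Finset ℝ := ((x.1 ∪ y.1) ×ˢ (x.2 ∪ y.2)).image
      (fun p => min |p.1 - p.2 - δ| |p.1 - p.2 + δ|) with hF
    refine ⟨(insert (1:ℝ) F).min' (Finset.insert_nonempty _ _), ?_, ?_⟩
    · have hm := (insert (1:ℝ) F).min'_mem (Finset.insert_nonempty _ _)
      rcases Finset.mem_insert.mp hm with h | h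
      · rw [h]; norm_num
      · rw [hF] at h
        obtain ⟨p, hp, he⟩ := Finset.mem_image.mp h
        rw [Finset.mem_product] at hp
        have hne := hC p.1 hp.1 p.2 hp.2
        rw [← he]
        refine lt_min (abs_pos.mpr ?_) (abs_pos.mpr ?_)
        · intro hc; exact hne.1 (by linarith)
        · intro hc; exact hne.2 (by linarith)
    · intro u hu v hv
      have hmem : min |u - v - δ| |u - v + δ| ∈ insert (1:ℝ) F := by
        rw [hF]
        have hp : (u, v) ∈ (x.1 ∪ y.1) ×ˢ (x.2 ∪ y.2) := Finset.mem_product.mpr ⟨hu, hv⟩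
        exact Finset.mem_insert_of_mem (Finset.mem_image_of_mem _ hp)
      have h := Finset.min'_le _ _ hmem
      exact ⟨le_trans h (min_le_left _ _), le_trans h (min_le_right _ _)⟩
  set η := min (g/16) (1/16) with hη
  have hη0 : 0 < η := lt_min (by linarith) (by norm_num)
  refine ⟨η, hη0, ?_⟩
  intro x' y' hx1' hx2' hy1' hy2' hd
  simp only [dXX, dX2, max_le_iff] at hd
  obtain ⟨⟨h11, h12⟩, h21, h22⟩ := hd
  have hη2 : 2*η < 1/2 := by
    have := min_le_right (g/16) (1/16); rw [← hη] at this; linarith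
  have hη4 : 2*(2*(2*η)) < g := by
    have := min_le_left (g/16) (1/16); rw [← hη] at this; linarith
  obtain ⟨ε1, l1, hε1, hε1le, htc1, hb11, hb12⟩ := extract_lemma x.1 x'.1 η hη0 h11
  obtain ⟨ε2, l2, hε2, hε2le, htc2, hb21, hb22⟩ := extract_lemma x.2 x'.2 η hη0 h12
  obtain ⟨ε3, l3, hε3, hε3le, htc3, hb31, hb32⟩ := extract_lemma y.1 y'.1 η hη0 h21
  obtain ⟨ε4, l4, hε4, hε4le, htc4, hb41, hb42⟩ := extract_lemma y.2 y'.2 η hη0 h22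
  obtain ⟨him1, hinj1, hd1⟩ := key_bij x.1 x'.1 hx1 hx1' ε1 (by linarith) l1 htc1 hb11 hb12
  obtain ⟨him2, hinj2, hd2⟩ := key_bij x.2 x'.2 hx2 hx2' ε2 (by linarith) l2 htc2 hb21 hb22
  obtain ⟨him3, hinj3, hd3⟩ := key_bij y.1 y'.1 hy1 hy1' ε3 (by linarith) l3 htc3 hb31 hb32
  obtain ⟨him4, hinj4, hd4⟩ := key_bij y.2 y'.2 hy2 hy2' ε4 (by linarith) l4 htc4 hb41 hb42
  have hd1' : ∀ u ∈ x'.1, |l1 u - u| ≤ 2*η := fun u hu => le_trans (hd1 u hu) hε1le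
  have hd2' : ∀ u ∈ x'.2, |l2 u - u| ≤ 2*η := fun u hu => le_trans (hd2 u hu) hε2le
  have hd3' : ∀ u ∈ y'.1, |l3 u - u| ≤ 2*η := fun u hu => le_trans (hd3 u hu) hε3le
  have hd4' : ∀ u ∈ y'.2, |l4 u - u| ≤ 2*η := fun u hu => le_trans (hd4 u hu) hε4le
  have gap11 : ∀ u ∈ x.1, ∀ v ∈ x.2, g ≤ |u - v - δ| ∧ g ≤ |u - v + δ| :=
    fun u hu v hv => hgap u (Finset.mem_union_left _ hu) v (Finset.mem_union_left _ hv)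
  have gap22 : ∀ u ∈ y.1, ∀ v ∈ y.2, g ≤ |u - v - δ| ∧ g ≤ |u - v + δ| :=
    fun u hu v hv => hgap u (Finset.mem_union_right _ hu) v (Finset.mem_union_right _ hv)
  have gap12 : ∀ u ∈ x.1, ∀ v ∈ y.2, g ≤ |u - v - δ| ∧ g ≤ |u - v + δ| :=
    fun u hu v hv => hgap u (Finset.mem_union_left _ hu) v (Finset.mem_union_right _ hv)
  have gap21 : ∀ u ∈ y.1, ∀ v ∈ x.2, g ≤ |u - v - δ| ∧ g ≤ |u - v + δ| :=
    fun u hu v hv => hgap u (Finset.mem_union_right _ hu) v (Finset.mem_union_left _ hv)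
  have e1 := phi_eq δ g (2*η) hη4 x.1 x.2 x'.1 x'.2 l1 l2 him1 hinj1 him2 hinj2 gap11 hd1' hd2'
  have e2 := phi_eq δ g (2*η) hη4 y.1 y.2 y'.1 y'.2 l3 l4 him3 hinj3 him4 hinj4 gap22 hd3' hd4'
  have e3 := phi_eq δ g (2*η) hη4 x.1 y.2 x'.1 y'.2 l1 l4 him1 hinj1 him4 hinj4 gap12 hd1' hd4'
  have e4 := phi_eq δ g (2*η) hη4 y.1 x.2 y'.1 x'.2 l3 l2 him3 hinj3 him2 hinj2 gap21 hd3' hd2'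
  simp only [hCoinc, e1, e2, e3, e4]
  simp [abs_nonneg, le_of_lt hε]
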